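/- Let b be a complex number with exp(2*pi*I*b) ≠ 1, u a real parameter, and define f(x) = -I*x*exp(I*x*(1-u))/(exp(I*x) - exp(2*pi*I*b)) as a formal power series in x. Then for every k ≥ 1, the k-th Taylor coefficient satisfies f^(k)(0)/k! = I^k * exp(-2*pi*I*b) * Σ_{j=1}^{k} (δ_{1j} + Li_{-j+1}(exp(-2*pi*I*b))) * (1-u)^(k-j) / ((j-1)!*(k-j)!), where δ_{1j} is the Kronecker delta and Li_s(z) = Σ_{m≥1} z^m/m^s is the polylogarithm. -/

import Mathlib

open PowerSeries

noncomputable def Saux (w : ℂ) (n : ℕ) : ℂ := ∑' m : ℕ, (m : ℂ) ^ n * w ^ (m + 1)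

lemma summable_Saux {w : ℂ} (hw : ‖w‖ < 1) (n : ℕ) :
    Summable fun m : ℕ => (m : ℂ) ^ n * w ^ (m + 1) := by
  refine ((summable_pow_mul_geometric_of_norm_lt_one (R := ℂ) n hw).mul_right w).congr
    fun m => ?_
  rw [pow_succ]; ring

lemma sum_antidiagonal_div_factorial (x y : ℂ) (n : ℕ) :
    ∑ p ∈ Finset.HasAntidiagonal.antidiagonal n, x ^ p.1 * y ^ p.2 / ((p.1.factorial : ℂ) * p.2.factorial) =
      (x + y) ^ n / n.factorial := by
  have h := congrArg (fun f => coeff n f) (exp_mul_exp_eq_exp_add x y)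
  simp only [coeff_mul, coeff_rescale, coeff_exp, map_div₀, map_one, map_natCast] at h
  rw [show (x + y) ^ n / (n.factorial : ℂ) = (x + y) ^ n * (1 / n.factorial) by
    rw [mul_one_div], ← h]
  refine Finset.sum_congr rfl fun p _ => ?_
  rw [one_div, one_div, div_eq_mul_inv, mul_inv]; ring

lemma Saux_eq {w : ℂ} (hw : ‖w‖ < 1) (n : ℕ) :
    Saux w n = (0 : ℂ) ^ n * w + w * ∑' m : ℕ, ((m : ℂ) + 1) ^ n * w ^ (m + 1) := by
  rw [Saux, Summable.tsum_eq_zero_add (summable_Saux hw n)]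
  congr 1
  · norm_num
  · rw [← tsum_mul_left]
    refine tsum_congr fun m => ?_
    push_cast
    rw [pow_succ]
    ring

lemma q_mul_Saux {q w : ℂ} (hqw : q * w = 1) (hw : ‖w‖ < 1) (n : ℕ) :
    q * Saux w n = (0 : ℂ) ^ n + ∑' m : ℕ, ((m : ℂ) + 1) ^ n * w ^ (m + 1) := by
  have h1 : q * Saux w n = ∑' m : ℕ, (m : ℂ) ^ n * w ^ m := by
    rw [Saux, ← tsum_mul_left]
    refine tsum_congr fun m => ?_
    rw [pow_succ']
    calc q * ((m : ℂ) ^ n * (w * w ^ m)) = (q * w) * ((m : ℂ) ^ n * w ^ m) := by ring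
    _ = (m : ℂ) ^ n * w ^ m := by rw [hqw, one_mul]
  rw [h1, Summable.tsum_eq_zero_add (summable_pow_mul_geometric_of_norm_lt_one (R := ℂ) n hw)]
  push_cast
  norm_num

lemma mk_mul_eq_one {q w : ℂ} (hqw : q * w = 1) (hw : ‖w‖ < 1) :
    (PowerSeries.mk fun n => -(Complex.I ^ n / n.factorial) * Saux w n) *
      (rescale Complex.I (exp ℂ) - C q) = 1 := by
  ext n
  rw [mul_sub, map_sub, coeff_mul, PowerSeries.coeff_mul_C, coeff_one, coeff_mk]
  have key : ∀ p ∈ Finset.HasAntidiagonal.antidiagonal n,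
      (coeff p.1 (PowerSeries.mk fun j => -(Complex.I ^ j / j.factorial) * Saux w j)) *
        (coeff p.2 (rescale Complex.I (exp ℂ))) =
      ∑' m : ℕ, -((Complex.I * m) ^ p.1 * Complex.I ^ p.2 /
          ((p.1.factorial : ℂ) * p.2.factorial)) * w ^ (m + 1) := by
    intro p _
    rw [coeff_mk, coeff_rescale, coeff_exp, map_div₀, map_one, map_natCast, Saux,
      ← tsum_mul_left, ← tsum_mul_right]
    refine tsum_congr fun m => ?_
    rw [mul_pow]
    ring
  rw [Finset.sum_congr rfl key, ← Summable.tsum_finsetSum (fun p _ => ?_)]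
  swap
  · refine ((summable_Saux hw p.1).mul_left
      (-(Complex.I ^ p.1 * Complex.I ^ p.2 / ((p.1.factorial : ℂ) * p.2.factorial)))).congr
      fun m => ?_
    rw [mul_pow]; ring
  have key2 : ∀ m : ℕ,
      (∑ p ∈ Finset.HasAntidiagonal.antidiagonal n, -((Complex.I * m) ^ p.1 * Complex.I ^ p.2 /
          ((p.1.factorial : ℂ) * p.2.factorial)) * w ^ (m + 1)) =
      -(Complex.I ^ n / n.factorial) * (((m : ℂ) + 1) ^ n * w ^ (m + 1)) := by
    intro m
    have hterm : ∀ p ∈ Finset.HasAntidiagonal.antidiagonal n,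
        -((Complex.I * m) ^ p.1 * Complex.I ^ p.2 / ((p.1.factorial : ℂ) * p.2.factorial)) *
          w ^ (m + 1) =
        ((Complex.I * m) ^ p.1 * Complex.I ^ p.2 / ((p.1.factorial : ℂ) * p.2.factorial)) *
          (-(w ^ (m + 1))) := fun p _ => by ring
    rw [Finset.sum_congr rfl hterm, ← Finset.sum_mul, sum_antidiagonal_div_factorial,
      show Complex.I * m + Complex.I = Complex.I * ((m : ℂ) + 1) by ring, mul_pow]
    ring
  rw [tsum_congr key2, tsum_mul_left]
  have hT : (∑' m : ℕ, ((m : ℂ) + 1) ^ n * w ^ (m + 1)) = q * Saux w n - (0 : ℂ) ^ n := by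
    rw [q_mul_Saux hqw hw n]; ring
  rw [hT]
  rcases n with _ | n
  · norm_num
    ring
  · simp only [Nat.succ_ne_zero, if_false, zero_pow (Nat.succ_ne_zero n)]
    ring

open PowerSeries in
theorem taylor_coefficients_f (b : ℂ)
    (hb : Complex.exp (2 * (Real.pi : ℂ) * Complex.I * b) ≠ 1)
    (habs : ‖Complex.exp (-(2 * (Real.pi : ℂ) * Complex.I * b))‖ < 1)
    (u : ℝ) (k : ℕ) (hk : 1 ≤ k) :
    PowerSeries.coeff k
        (-(PowerSeries.X * PowerSeries.rescale (Complex.I * ((1 : ℂ) - (u : ℂ))) (PowerSeries.exp ℂ)) *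
          (PowerSeries.rescale Complex.I (PowerSeries.exp ℂ) -
            PowerSeries.C (Complex.exp (2 * (Real.pi : ℂ) * Complex.I * b)))⁻¹ *
          PowerSeries.C Complex.I) =
      Complex.I ^ k * Complex.exp (-(2 * (Real.pi : ℂ) * Complex.I * b)) *
        ∑ j ∈ Finset.Icc 1 k,
          ((if j = 1 then (1 : ℂ) else 0) +
              ∑' m : ℕ, ((m : ℂ) + 1) ^ (j - 1) *
                Complex.exp (-(2 * (Real.pi : ℂ) * Complex.I * b)) ^ (m + 1)) *
            ((1 : ℂ) - (u : ℂ)) ^ (k - j) / (((j - 1).factorial : ℂ) * ((k - j).factorial : ℂ)) := by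
  set q : ℂ := Complex.exp (2 * (Real.pi : ℂ) * Complex.I * b) with hq
  set w : ℂ := Complex.exp (-(2 * (Real.pi : ℂ) * Complex.I * b)) with hwdef
  have hqw : q * w = 1 := by
    rw [hq, hwdef, ← Complex.exp_add, add_neg_cancel, Complex.exp_zero]
  have hw : ‖w‖ < 1 := by exact habs
  have hconst : constantCoeff (rescale Complex.I (exp ℂ) - C q) ≠ 0 := by
    rw [map_sub, constantCoeff_C, ← coeff_zero_eq_constantCoeff_apply, coeff_rescale, pow_zero,
      one_mul, coeff_zero_eq_constantCoeff_apply, constantCoeff_exp]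
    exact sub_ne_zero.mpr (Ne.symm hb)
  have hinv : (rescale Complex.I (exp ℂ) - C q)⁻¹ =
      PowerSeries.mk fun n => -(Complex.I ^ n / n.factorial) * Saux w n :=
    (PowerSeries.inv_eq_iff_mul_eq_one hconst).mpr (mk_mul_eq_one hqw hw)
  rw [hinv]
  obtain ⟨n, rfl⟩ : ∃ n, k = n + 1 := ⟨k - 1, (Nat.succ_pred_eq_of_pos hk).symm⟩
  -- RHS transformation
  have hRHS : Complex.I ^ (n + 1) * w *
      ∑ j ∈ Finset.Icc 1 (n + 1),
        ((if j = 1 then (1 : ℂ) else 0) +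
            ∑' m : ℕ, ((m : ℂ) + 1) ^ (j - 1) * w ^ (m + 1)) *
          ((1 : ℂ) - (u : ℂ)) ^ (n + 1 - j) /
            (((j - 1).factorial : ℂ) * ((n + 1 - j).factorial : ℂ)) =
      ∑ i ∈ Finset.range (n + 1),
        Complex.I ^ (n + 1) * Saux w i * ((1 : ℂ) - (u : ℂ)) ^ (n - i) /
          ((i.factorial : ℂ) * ((n - i).factorial : ℂ)) := by
    rw [Finset.mul_sum, ← Finset.Ico_add_one_right_eq_Icc, Finset.sum_Ico_eq_sum_range]
    refine Finset.sum_congr (by norm_num) fun i hi => ?_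
    have h1 : 1 + i - 1 = i := by omega
    have h2 : n + 1 - (1 + i) = n - i := by omega
    rw [h1, h2]
    simp only [show (1 + i = 1) ↔ (i = 0) by omega]
    have hS := Saux_eq hw i
    have : w * ((if i = 0 then (1 : ℂ) else 0) +
        ∑' m : ℕ, ((m : ℂ) + 1) ^ i * w ^ (m + 1)) = Saux w i := by
      rw [hS]
      rcases eq_or_ne i 0 with h | h <;> simp [h, zero_pow] <;> ring
    calc Complex.I ^ (n + 1) * w *
        (((if i = 0 then (1 : ℂ) else 0) + ∑' m : ℕ, ((m : ℂ) + 1) ^ i * w ^ (m + 1)) *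
          ((1 : ℂ) - (u : ℂ)) ^ (n - i) / ((i.factorial : ℂ) * ((n - i).factorial : ℂ)))
        = Complex.I ^ (n + 1) * (w * ((if i = 0 then (1 : ℂ) else 0) +
            ∑' m : ℕ, ((m : ℂ) + 1) ^ i * w ^ (m + 1))) *
          ((1 : ℂ) - (u : ℂ)) ^ (n - i) / ((i.factorial : ℂ) * ((n - i).factorial : ℂ)) := by
          ring
      _ = _ := by rw [this]
  rw [hRHS]
  -- LHS computation
  rw [PowerSeries.coeff_mul_C, neg_mul, map_neg, mul_assoc, PowerSeries.coeff_succ_X_mul,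
    coeff_mul]
  rw [Finset.Nat.sum_antidiagonal_eq_sum_range_succ_mk]
  conv_rhs => rw [← Finset.sum_range_reflect]
  rw [← Finset.sum_neg_distrib, Finset.sum_mul]
  refine Finset.sum_congr rfl fun a ha => ?_
  have ha' : a ≤ n := by simpa using Nat.lt_succ_iff.mp (Finset.mem_range.mp ha)
  have h1 : n + 1 - 1 - a = n - a := by omega
  rw [h1, coeff_rescale, coeff_exp, map_div₀, map_one, map_natCast, coeff_mk]
  have h2 : n - (n - a) = a := Nat.sub_sub_self ha'
  rw [h2]
  have h3 : Complex.I ^ (n + 1) = Complex.I ^ a * Complex.I ^ (n - a) * Complex.I := by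
    rw [← pow_add, Nat.add_sub_cancel' ha', pow_succ]
  rw [h3, mul_pow]
  simp only [div_eq_mul_inv, mul_inv, one_div]
  ring
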